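/- Let $X$ and $Y$ be non-negative random variables and define the discrepancy $\kappa(X) = \mathbb{E}\left|\frac{X - X'}{X + X'}\right|$ where $X'$ is an independent copy of $X$ (with the convention $0/0 = 0$). Then $\kappa(XY) \leq 6\kappa(X) + 6\kappa(Y)$, where in the definition of $\kappa(XY)$ the pair $(X', Y')$ is an independent copy of $(X, Y)$. -/

import Mathlib

open MeasureTheory

/-- The pointwise key inequality: the "discrepancy distance"
`|(a-b)/(a+b)|` is submultiplicative-additive on nonnegative reals. -/
lemma kappa_key {x x' y y' : ℝ} (hx : 0 ≤ x) (hx' : 0 ≤ x') (hy : 0 ≤ y) (hy' : 0 ≤ y') :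
    |(x*y - x'*y') / (x*y + x'*y')| ≤ |(x - x')/(x + x')| + |(y - y')/(y + y')| := by
  rcases (add_nonneg (mul_nonneg hx hy) (mul_nonneg hx' hy')).eq_or_lt with hp | hp
  · have h1 : x*y = 0 := by nlinarith [mul_nonneg hx hy, mul_nonneg hx' hy']
    have h2 : x'*y' = 0 := by nlinarith [mul_nonneg hx hy, mul_nonneg hx' hy']
    rw [h1, h2]
    simp
    positivity
  · have hs : 0 < x + x' := by
      by_contra h
      push_neg at h
      have hx0 : x = 0 := le_antisymm (by linarith) hx
      have hx'0 : x' = 0 := le_antisymm (by linarith) hx'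
      nlinarith
    have ht : 0 < y + y' := by
      by_contra h
      push_neg at h
      have hy0 : y = 0 := le_antisymm (by linarith) hy
      have hy'0 : y' = 0 := le_antisymm (by linarith) hy'
      nlinarith
    rw [abs_div, abs_div, abs_div, abs_of_pos hp, abs_of_pos hs, abs_of_pos ht,
      div_add_div _ _ hs.ne' ht.ne', div_le_div_iff₀ hp (by positivity)]
    have hple : 0 ≤ x*y + x'*y' := hp.le
    rcases le_total x' x with h1 | h1 <;> rcases le_total y' y with h2 | h2
    · have hD : 0 ≤ x*y - x'*y' := by nlinarith
      rw [abs_of_nonneg (by linarith : (0:ℝ) ≤ x - x'),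
        abs_of_nonneg (by linarith : (0:ℝ) ≤ y - y'), abs_of_nonneg hD]
      nlinarith [mul_nonneg (mul_nonneg hD (by linarith : (0:ℝ) ≤ x - x'))
        (by linarith : (0:ℝ) ≤ y - y')]
    · rw [abs_of_nonneg (by linarith : (0:ℝ) ≤ x - x'),
        abs_of_nonpos (by linarith : y - y' ≤ (0:ℝ))]
      rcases abs_cases (x*y - x'*y') with ⟨e3, _⟩ | ⟨e3, _⟩ <;> rw [e3]
      · nlinarith [mul_nonneg (mul_nonneg (mul_nonneg (by linarith : (0:ℝ) ≤ y' - y) ht.le)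
            (by linarith : (0:ℝ) ≤ x + x' - (x - x'))) (by linarith : (0:ℝ) ≤ x + x' + (x - x')),
          mul_nonneg (mul_nonneg hs.le (by linarith : (0:ℝ) ≤ y' - y)) hple]
      · nlinarith [mul_nonneg (mul_nonneg (by linarith : (0:ℝ) ≤ x - x') ht.le) hple,
          mul_nonneg (mul_nonneg (mul_nonneg (by linarith : (0:ℝ) ≤ x - x') hs.le)
            (by linarith : (0:ℝ) ≤ y + y' - (y' - y))) (by linarith : (0:ℝ) ≤ y + y' + (y' - y))]
    · rw [abs_of_nonpos (by linarith : x - x' ≤ (0:ℝ)),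
        abs_of_nonneg (by linarith : (0:ℝ) ≤ y - y')]
      rcases abs_cases (x*y - x'*y') with ⟨e3, _⟩ | ⟨e3, _⟩ <;> rw [e3]
      · nlinarith [mul_nonneg (mul_nonneg (mul_nonneg (by linarith : (0:ℝ) ≤ x' - x) hs.le)
            (by linarith : (0:ℝ) ≤ y + y' - (y - y'))) (by linarith : (0:ℝ) ≤ y + y' + (y - y')),
          mul_nonneg (mul_nonneg ht.le (by linarith : (0:ℝ) ≤ x' - x)) hple]
      · nlinarith [mul_nonneg (mul_nonneg (by linarith : (0:ℝ) ≤ y - y') hs.le) hple,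
          mul_nonneg (mul_nonneg (mul_nonneg (by linarith : (0:ℝ) ≤ y - y') ht.le)
            (by linarith : (0:ℝ) ≤ x + x' - (x' - x))) (by linarith : (0:ℝ) ≤ x + x' + (x' - x))]
    · have hD : x*y - x'*y' ≤ 0 := by nlinarith
      rw [abs_of_nonpos (by linarith : x - x' ≤ (0:ℝ)),
        abs_of_nonpos (by linarith : y - y' ≤ (0:ℝ)), abs_of_nonpos hD]
      nlinarith [mul_nonneg (mul_nonneg (by linarith : (0:ℝ) ≤ x'*y' - x*y)
        (by linarith : (0:ℝ) ≤ x' - x)) (by linarith : (0:ℝ) ≤ y' - y)]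

/-- The discrepancy `κ` of (the law of) a nonnegative random variable:
`κ(X) = 𝔼|(X - X')/(X + X')|` with `X'` an independent copy of `X`
(convention `0/0 = 0`, which is the Lean convention for division). -/
noncomputable def kappa (μ : Measure ℝ) : ℝ :=
  ∫ p : ℝ × ℝ, |(p.1 - p.2) / (p.1 + p.2)| ∂(μ.prod μ)

lemma kappa_Fmeas : Measurable (fun p : ℝ × ℝ => |(p.1 - p.2) / (p.1 + p.2)|) :=
  ((measurable_fst.sub measurable_snd).div (measurable_fst.add measurable_snd)).abs

lemma kappa_Fbdd {a b : ℝ} (ha : 0 ≤ a) (hb : 0 ≤ b) : |(a - b) / (a + b)| ≤ 1 := by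
  rcases (add_nonneg ha hb).eq_or_lt' with h | h
  · have : a = 0 := le_antisymm (by linarith) ha
    have : b = 0 := le_antisymm (by linarith) hb
    simp_all
  · rw [abs_div, abs_of_pos h, div_le_one h, abs_le]
    constructor <;> linarith

lemma kappa_nonneg (ν : Measure ℝ) : 0 ≤ kappa ν :=
  integral_nonneg fun _ => abs_nonneg _

lemma kappa_map (μ : Measure (ℝ × ℝ)) [IsProbabilityMeasure μ] {g : ℝ × ℝ → ℝ}
    (hg : Measurable g) :
    kappa (μ.map g) =
      ∫ q : (ℝ × ℝ) × (ℝ × ℝ), |(g q.1 - g q.2) / (g q.1 + g q.2)| ∂(μ.prod μ) := by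
  unfold kappa
  rw [Measure.map_prod_map μ μ hg hg,
    integral_map (hg.prodMap hg).aemeasurable kappa_Fmeas.aestronglyMeasurable]
  rfl

/-- For nonnegative random variables `X, Y` with joint law `μ` (a probability measure on
`ℝ × ℝ` carried by the nonnegative quadrant), `κ(XY) ≤ 6 κ(X) + 6 κ(Y)`. -/
theorem kappa_mul_le (μ : Measure (ℝ × ℝ)) [IsProbabilityMeasure μ]
    (hnn : ∀ᵐ p ∂μ, 0 ≤ p.1 ∧ 0 ≤ p.2) :
    kappa (μ.map (fun p => p.1 * p.2)) ≤
      6 * kappa (μ.map Prod.fst) + 6 * kappa (μ.map Prod.snd) := by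
  have hq : ∀ᵐ q : (ℝ × ℝ) × (ℝ × ℝ) ∂(μ.prod μ),
      (0 ≤ q.1.1 ∧ 0 ≤ q.1.2) ∧ (0 ≤ q.2.1 ∧ 0 ≤ q.2.2) :=
    ((Measure.quasiMeasurePreserving_fst (μ := μ) (ν := μ)).ae hnn).and
      ((Measure.quasiMeasurePreserving_snd (μ := μ) (ν := μ)).ae hnn)
  set f : (ℝ × ℝ) × (ℝ × ℝ) → ℝ :=
    fun q => |(q.1.1 * q.1.2 - q.2.1 * q.2.2) / (q.1.1 * q.1.2 + q.2.1 * q.2.2)| with hf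
  set g1 : (ℝ × ℝ) × (ℝ × ℝ) → ℝ := fun q => |(q.1.1 - q.2.1) / (q.1.1 + q.2.1)| with hg1
  set g2 : (ℝ × ℝ) × (ℝ × ℝ) → ℝ := fun q => |(q.1.2 - q.2.2) / (q.1.2 + q.2.2)| with hg2
  have hmf : Measurable f :=
    kappa_Fmeas.comp ((measurable_fst.fst.mul measurable_fst.snd).prodMk
      (measurable_snd.fst.mul measurable_snd.snd))
  have hmg1 : Measurable g1 :=
    kappa_Fmeas.comp (measurable_fst.fst.prodMk measurable_snd.fst)
  have hmg2 : Measurable g2 :=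
    kappa_Fmeas.comp (measurable_fst.snd.prodMk measurable_snd.snd)
  have hint : ∀ (h : (ℝ × ℝ) × (ℝ × ℝ) → ℝ), Measurable h →
      (∀ᵐ q ∂(μ.prod μ), ‖h q‖ ≤ 1) → Integrable h (μ.prod μ) := fun h hm hb =>
    (integrable_const (1 : ℝ)).mono' hm.aestronglyMeasurable hb
  have hif : Integrable f (μ.prod μ) := hint f hmf <| hq.mono fun q hq => by
    simpa [f, Real.norm_eq_abs, abs_abs] using
      kappa_Fbdd (mul_nonneg hq.1.1 hq.1.2) (mul_nonneg hq.2.1 hq.2.2)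
  have hig1 : Integrable g1 (μ.prod μ) := hint g1 hmg1 <| hq.mono fun q hq => by
    simpa [g1, Real.norm_eq_abs, abs_abs] using kappa_Fbdd hq.1.1 hq.2.1
  have hig2 : Integrable g2 (μ.prod μ) := hint g2 hmg2 <| hq.mono fun q hq => by
    simpa [g2, Real.norm_eq_abs, abs_abs] using kappa_Fbdd hq.1.2 hq.2.2
  have key : ∫ q, f q ∂(μ.prod μ) ≤ ∫ q, (g1 q + g2 q) ∂(μ.prod μ) := by
    refine integral_mono_ae hif (hig1.add hig2) ?_
    exact hq.mono fun q hq => kappa_key hq.1.1 hq.2.1 hq.1.2 hq.2.2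
  have e0 : kappa (μ.map (fun p => p.1 * p.2)) = ∫ q, f q ∂(μ.prod μ) :=
    kappa_map μ (measurable_fst.mul measurable_snd)
  have e1 : kappa (μ.map Prod.fst) = ∫ q, g1 q ∂(μ.prod μ) := kappa_map μ measurable_fst
  have e2 : kappa (μ.map Prod.snd) = ∫ q, g2 q ∂(μ.prod μ) := kappa_map μ measurable_snd
  have hadd : ∫ q, (g1 q + g2 q) ∂(μ.prod μ)
      = (∫ q, g1 q ∂(μ.prod μ)) + ∫ q, g2 q ∂(μ.prod μ) := integral_add hig1 hig2
  have h1 := kappa_nonneg (μ.map Prod.fst)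
  have h2 := kappa_nonneg (μ.map Prod.snd)
  rw [e0]
  calc ∫ q, f q ∂(μ.prod μ) ≤ ∫ q, (g1 q + g2 q) ∂(μ.prod μ) := key
    _ = kappa (μ.map Prod.fst) + kappa (μ.map Prod.snd) := by rw [hadd, ← e1, ← e2]
    _ ≤ 6 * kappa (μ.map Prod.fst) + 6 * kappa (μ.map Prod.snd) := by linarith
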